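/- Let r ≥ 2, 0 < ρ < 1, and suppose n < ρ·log d / log r. If T is uniformly distributed on the set F^d of all labeled forests on d nodes, then for any estimator T̂ mapping n samples from ({1,...,r}^d)^n to F^d, the error probability satisfies P(T̂ ≠ T) > 1 - d²·exp((ρ-1)·d·log d). -/

import Mathlib

set_option linter.unusedSectionVars false

open Finset

/-- The set of all labeled forests on `d` nodes. -/
abbrev AllForests (d : ℕ) := {G : SimpleGraph (Fin d) // G.IsAcyclic}

noncomputable instance (d : ℕ) : Fintype (AllForests d) := Fintype.ofFinite _

noncomputable instance (d : ℕ) : DecidableEq (AllForests d) := Classical.decEq _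

namespace ForestCount

open SimpleGraph


variable {d : ℕ}

variable {d : ℕ}

lemma adj_edge' {ℓ b y : Fin d} (hlb : ℓ ≠ b) (h : (edge ℓ b).Adj ℓ y) : y = b := by
  rcases (edge_adj ℓ b ℓ y).mp h with ⟨(⟨_, rfl⟩ | ⟨h1, h2⟩), _⟩
  · rfl
  · exact absurd h1 hlb

/-- Pendant lemma: attaching a new pendant edge at an isolated vertex keeps a graph acyclic. -/
lemma isAcyclic_sup_pendant {G : SimpleGraph (Fin d)} (hG : G.IsAcyclic)
    {ℓ b : Fin d} (hlb : ℓ ≠ b) (hiso : ∀ w, ¬ G.Adj ℓ w) :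
    (G ⊔ edge ℓ b).IsAcyclic := by
  intro v c hc
  by_cases hm : ℓ ∈ c.support
  · have hc' := hc.rotate hm
    set c' := c.rotate ℓ hm with hcdef
    clear_value c'
    cases c' with
    | nil => exact hc'.ne_nil rfl
    | cons h p =>
      rename_i x
      have hx : x = b := by
        rcases h with h | h
        · exact absurd h (hiso x)
        · exact adj_edge' hlb h
      have hnm : s(ℓ, x) ∉ p.edges := ((Walk.cons_isCycle_iff p h).mp hc').2
      have hlx : ℓ ≠ x := by rw [hx]; exact hlb
      obtain ⟨y, h2, q, hq⟩ := Walk.exists_eq_cons_of_ne hlx p.reverse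
      have hy : y = b := by
        rcases h2 with h2 | h2
        · exact absurd h2 (hiso y)
        · exact adj_edge' hlb h2
      apply hnm
      have hmem : s(ℓ, y) ∈ p.reverse.edges := by rw [hq]; exact List.mem_cons_self
      rw [hy.trans hx.symm] at hmem
      rwa [Walk.edges_reverse, List.mem_reverse] at hmem
  · have hq : ∀ e ∈ c.edges, e ∈ G.edgeSet := by
      intro e he
      have := Walk.edges_subset_edgeSet c he
      rw [edgeSet_sup] at this
      rcases this with h | h
      · exact h
      · rw [edge_edgeSet_of_ne hlb, Set.mem_singleton_iff] at h
        subst h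
        exact absurd (Walk.fst_mem_support_of_mem_edges c he) hm
    exact hG (c.transfer G hq) (hc.transfer hq)

variable [NeZero d]

/-- junk-tolerant minimum of a finset of `Fin d`. -/
def minF (s : Finset (Fin d)) : Fin d :=
  if h : s.Nonempty then s.min' h else 0

def maxF (s : Finset (Fin d)) : Fin d :=
  if h : s.Nonempty then s.max' h else 0

lemma minF_mem {s : Finset (Fin d)} (h : s.Nonempty) : minF s ∈ s := by
  rw [minF, dif_pos h]; exact s.min'_mem h

lemma maxF_mem {s : Finset (Fin d)} (h : s.Nonempty) : maxF s ∈ s := by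
  rw [maxF, dif_pos h]; exact s.max'_mem h

lemma minF_le {s : Finset (Fin d)} {a : Fin d} (h : a ∈ s) : minF s ≤ a := by
  rw [minF, dif_pos ⟨a, h⟩]; exact s.min'_le a h

lemma le_maxF {s : Finset (Fin d)} {a : Fin d} (h : a ∈ s) : a ≤ maxF s := by
  rw [maxF, dif_pos ⟨a, h⟩]; exact s.le_max' a h

lemma minF_ne_maxF {s : Finset (Fin d)} (h : s.card = 2) : minF s ≠ maxF s := by
  intro hemm
  obtain ⟨x, hx, y, hy, hxy⟩ := Finset.one_lt_card.mp (by omega : 1 < s.card)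
  exact hxy (le_antisymm ((le_maxF hx).trans (hemm ▸ minF_le hy))
    ((le_maxF hy).trans (hemm ▸ minF_le hx)))

/-- Prüfer-style decoding of a list into a forest. -/
def decode : List (Fin d) → Finset (Fin d) → SimpleGraph (Fin d)
  | [], V => edge (minF V) (maxF V)
  | b :: t, V =>
      decode t (V.erase (minF (V \ (b :: t).toFinset))) ⊔ edge (minF (V \ (b :: t).toFinset)) b

/-- invariant -/
def Inv (a : List (Fin d)) (V : Finset (Fin d)) : Prop :=
  (∀ x ∈ a, x ∈ V) ∧ V.card = a.length + 2

lemma avail_nonempty {a : List (Fin d)} {V : Finset (Fin d)} (h : Inv a V) :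
    (V \ a.toFinset).Nonempty := by
  rw [← Finset.card_pos]
  have h0 := h.2
  have h1 : a.toFinset.card ≤ a.length := a.toFinset_card_le
  have h2 : V.card - a.toFinset.card ≤ (V \ a.toFinset).card := Finset.le_card_sdiff _ _
  omega

lemma Inv.tail {b : Fin d} {t : List (Fin d)} {V : Finset (Fin d)} (h : Inv (b :: t) V) :
    Inv t (V.erase (minF (V \ (b :: t).toFinset))) := by
  have hne := avail_nonempty h
  have hℓ := minF_mem hne
  rw [Finset.mem_sdiff] at hℓ
  constructor
  · intro x hx
    rw [Finset.mem_erase]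
    refine ⟨?_, h.1 x (List.mem_cons_of_mem _ hx)⟩
    intro hxl
    rw [hxl] at hx
    exact hℓ.2 (List.mem_toFinset.mpr (List.mem_cons_of_mem _ hx))
  · rw [Finset.card_erase_of_mem hℓ.1, h.2]
    simp

lemma mem_of_adj : ∀ {a : List (Fin d)} {V : Finset (Fin d)}, Inv a V →
    ∀ {x y : Fin d}, (decode a V).Adj x y → x ∈ V
  | [], V, h, x, y, hadj => by
    have hV : V.Nonempty := Finset.card_pos.mp (by rw [h.2]; omega)
    rcases (edge_adj _ _ x y).mp hadj with ⟨(⟨rfl, _⟩ | ⟨rfl, _⟩), _⟩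
    · exact minF_mem hV
    · exact maxF_mem hV
  | b :: t, V, h, x, y, hadj => by
    have hne := avail_nonempty h
    have hℓ := minF_mem hne
    rw [Finset.mem_sdiff] at hℓ
    rcases hadj with hadj | hadj
    · exact Finset.mem_of_mem_erase (mem_of_adj h.tail hadj)
    · rcases (edge_adj _ _ x y).mp hadj with ⟨(⟨rfl, _⟩ | ⟨hxb, _⟩), _⟩
      · exact hℓ.1
      · rw [hxb]; exact h.1 b (List.mem_cons_self)

/-- the chosen minimal available vertex is isolated in the recursive graph -/
lemma not_adj_min {b : Fin d} {t : List (Fin d)} {V : Finset (Fin d)} (h : Inv (b :: t) V)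
    {y : Fin d} :
    ¬ (decode t (V.erase (minF (V \ (b :: t).toFinset)))).Adj (minF (V \ (b :: t).toFinset)) y :=
  fun hadj => (Finset.notMem_erase _ _) (mem_of_adj h.tail hadj)

lemma min_ne_b {b : Fin d} {t : List (Fin d)} {V : Finset (Fin d)} (h : Inv (b :: t) V) :
    minF (V \ (b :: t).toFinset) ≠ b := by
  have hℓ := minF_mem (avail_nonempty h)
  rw [Finset.mem_sdiff] at hℓ
  intro hc
  exact hℓ.2 (by rw [hc]; exact List.mem_toFinset.mpr (List.mem_cons_self))

lemma isAcyclic_decode : ∀ {a : List (Fin d)} {V : Finset (Fin d)}, Inv a V →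
    (decode a V).IsAcyclic
  | [], V, h => by
    have : decode ([] : List (Fin d)) V = (⊥ : SimpleGraph (Fin d)) ⊔ edge (minF V) (maxF V) := by
      rw [bot_sup_eq]; rfl
    rw [this]
    exact isAcyclic_sup_pendant isAcyclic_bot (minF_ne_maxF h.2) (by simp)
  | b :: t, V, h =>
    isAcyclic_sup_pendant (isAcyclic_decode h.tail) (min_ne_b h) (fun w => not_adj_min h)

/-- every vertex of V has a neighbor -/
lemma exists_adj : ∀ {a : List (Fin d)} {V : Finset (Fin d)}, Inv a V →
    ∀ {v : Fin d}, v ∈ V → ∃ w, (decode a V).Adj v w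
  | [], V, h, v, hv => by
    have hV : V.Nonempty := ⟨v, hv⟩
    have hmm := minF_ne_maxF h.2
    have h2 : V.card ≤ 2 := le_of_eq h.2
    have : v = minF V ∨ v = maxF V := by
      by_contra hc
      push_neg at hc
      have : 2 < V.card := by
        apply Finset.two_lt_card.mpr
        exact ⟨_, minF_mem hV, _, maxF_mem hV, v, hv, hmm, (Ne.symm hc.1), (Ne.symm hc.2)⟩
      omega
    rcases this with rfl | rfl
    · exact ⟨maxF V, (edge_adj _ _ _ _).mpr ⟨Or.inl ⟨rfl, rfl⟩, hmm⟩⟩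
    · exact ⟨minF V, (edge_adj _ _ _ _).mpr ⟨Or.inr ⟨rfl, rfl⟩, Ne.symm hmm⟩⟩
  | b :: t, V, h, v, hv => by
    by_cases hvl : v = minF (V \ (b :: t).toFinset)
    · subst hvl
      exact ⟨b, Or.inr ((edge_adj _ _ _ _).mpr ⟨Or.inl ⟨rfl, rfl⟩, min_ne_b h⟩)⟩
    · obtain ⟨w, hw⟩ := exists_adj h.tail (Finset.mem_erase.mpr ⟨hvl, hv⟩)
      exact ⟨w, Or.inl hw⟩

/-- vertices in the list have at least two neighbors -/
lemma two_adj : ∀ {a : List (Fin d)} {V : Finset (Fin d)}, Inv a V →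
    ∀ {v : Fin d}, v ∈ a → ∃ w w', w ≠ w' ∧ (decode a V).Adj v w ∧ (decode a V).Adj v w'
  | [], _, _, _, hv => absurd hv List.not_mem_nil
  | b :: t, V, h, v, hv => by
    have hℓmem := minF_mem (avail_nonempty h)
    rw [Finset.mem_sdiff] at hℓmem
    rcases List.mem_cons.mp hv with rfl | hvt
    · -- v = b : new edge to ℓ plus a neighbor in the recursive graph
      have hbV : v ∈ V.erase (minF (V \ (v :: t).toFinset)) := by
        refine Finset.mem_erase.mpr ⟨Ne.symm (min_ne_b h), h.1 v (List.mem_cons_self)⟩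
      obtain ⟨w, hw⟩ := exists_adj h.tail hbV
      refine ⟨w, minF (V \ (v :: t).toFinset), ?_, Or.inl hw, ?_⟩
      · intro hc
        rw [hc] at hw
        exact not_adj_min h hw.symm
      · exact Or.inr ((edge_adj _ _ _ _).mpr ⟨Or.inr ⟨rfl, rfl⟩, Ne.symm (min_ne_b h)⟩)
    · obtain ⟨w, w', hww, hw, hw'⟩ := two_adj h.tail hvt
      exact ⟨w, w', hww, Or.inl hw, Or.inl hw'⟩

/-- vertices not in the list have at most one neighbor -/
lemma subsingleton_adj : ∀ {a : List (Fin d)} {V : Finset (Fin d)}, Inv a V →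
    ∀ {v : Fin d}, v ∉ a → ∀ {w w' : Fin d},
      (decode a V).Adj v w → (decode a V).Adj v w' → w = w'
  | [], V, h, v, hv, w, w', hw, hw' => by
    rcases (edge_adj _ _ _ _).mp hw with ⟨(⟨rfl, rfl⟩ | ⟨rfl, rfl⟩), _⟩ <;>
      rcases (edge_adj _ _ _ _).mp hw' with ⟨(⟨h1, rfl⟩ | ⟨h1, rfl⟩), h2⟩
    · rfl
    · exact absurd h1.symm ((minF_ne_maxF h.2).symm)
    · exact absurd h1 ((minF_ne_maxF h.2).symm)
    · rfl
  | b :: t, V, h, v, hv, w, w', hw, hw' => by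
    have hvb : v ≠ b := fun hc => hv (hc ▸ List.mem_cons_self)
    have hvt : v ∉ t := fun hc => hv (List.mem_cons_of_mem _ hc)
    by_cases hvl : v = minF (V \ (b :: t).toFinset)
    · -- only neighbor is b
      have key : ∀ {z : Fin d}, (decode (b :: t) V).Adj v z → z = b := by
        intro z hz
        rcases hz with hz | hz
        · rw [hvl] at hz; exact absurd hz (not_adj_min h)
        · rcases (edge_adj _ _ _ _).mp hz with ⟨(⟨_, rfl⟩ | ⟨h1, rfl⟩), _⟩
          · rfl
          · exact absurd (h1.symm.trans hvl).symm (min_ne_b h)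
      rw [key hw, key hw']
    · -- v untouched by the new edge
      have key : ∀ {z : Fin d}, (decode (b :: t) V).Adj v z →
          (decode t (V.erase (minF (V \ (b :: t).toFinset)))).Adj v z := by
        intro z hz
        rcases hz with hz | hz
        · exact hz
        · rcases (edge_adj _ _ _ _).mp hz with ⟨(⟨h1, _⟩ | ⟨h1, _⟩), _⟩
          · exact absurd h1 hvl
          · exact absurd h1 hvb
      exact subsingleton_adj h.tail hvt (key hw) (key hw')


lemma adj_tail_iff {b : Fin d} {t : List (Fin d)} {V : Finset (Fin d)} (h : Inv (b :: t) V)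
    {x y : Fin d} :
    (decode t (V.erase (minF (V \ (b :: t).toFinset)))).Adj x y ↔
      (decode (b :: t) V).Adj x y ∧ x ≠ minF (V \ (b :: t).toFinset) ∧
        y ≠ minF (V \ (b :: t).toFinset) := by
  constructor
  · intro hadj
    refine ⟨Or.inl hadj, ?_, ?_⟩
    · exact Finset.ne_of_mem_erase (mem_of_adj h.tail hadj)
    · exact Finset.ne_of_mem_erase (mem_of_adj h.tail hadj.symm)
  · rintro ⟨hadj | hadj, hx, hy⟩
    · exact hadj
    · rcases (edge_adj _ _ _ _).mp hadj with ⟨(⟨h1, _⟩ | ⟨_, h1⟩), _⟩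
      · exact absurd h1 hx
      · exact absurd h1 hy

lemma min_not_mem {b : Fin d} {t : List (Fin d)} {V : Finset (Fin d)} (h : Inv (b :: t) V) :
    minF (V \ (b :: t).toFinset) ∉ (b :: t) := by
  have hℓ := minF_mem (avail_nonempty h)
  rw [Finset.mem_sdiff] at hℓ
  exact fun hc => hℓ.2 (List.mem_toFinset.mpr hc)

lemma decode_inj : ∀ (a a' : List (Fin d)) (V : Finset (Fin d)), Inv a V → Inv a' V →
    decode a V = decode a' V → a = a' := by
  intro a
  induction a with
  | nil =>
    intro a' V h h' _
    cases a' with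
    | nil => rfl
    | cons b' t' =>
      exfalso
      have h1 := h.2
      have h2 := h'.2
      simp only [List.length_nil, List.length_cons] at h1 h2
      omega
  | cons b t ih =>
    intro a' V h h' heq
    cases a' with
    | nil =>
      exfalso
      have h1 := h.2
      have h2 := h'.2
      simp only [List.length_nil, List.length_cons] at h1 h2
      omega
    | cons b' t' =>
      -- membership in the two lists is the same
      have key : ∀ (l l' : List (Fin d)), Inv l V → Inv l' V → decode l V = decode l' V →
          ∀ v ∈ l, v ∈ l' := by
        intro l l' hl hl' hll v hv
        by_contra hv'
        obtain ⟨w, w', hne, h1, h2⟩ := two_adj hl hv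
        rw [hll] at h1 h2
        exact hne (subsingleton_adj hl' hv' h1 h2)
      have hset : V \ (b :: t).toFinset = V \ (b' :: t').toFinset := by
        ext v
        simp only [Finset.mem_sdiff, List.mem_toFinset]
        constructor
        · rintro ⟨hvV, hvl⟩
          exact ⟨hvV, fun hc => hvl (key _ _ h' h heq.symm v hc)⟩
        · rintro ⟨hvV, hvl⟩
          exact ⟨hvV, fun hc => hvl (key _ _ h h' heq v hc)⟩
      have hℓeq : minF (V \ (b :: t).toFinset) = minF (V \ (b' :: t').toFinset) := by
        rw [hset]
      -- b = b'
      have hadjb : (decode (b :: t) V).Adj (minF (V \ (b :: t).toFinset)) b :=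
        Or.inr ((edge_adj _ _ _ _).mpr ⟨Or.inl ⟨rfl, rfl⟩, min_ne_b h⟩)
      have hadjb' : (decode (b :: t) V).Adj (minF (V \ (b :: t).toFinset)) b' := by
        rw [heq, hℓeq]
        exact Or.inr ((edge_adj _ _ _ _).mpr ⟨Or.inl ⟨rfl, rfl⟩, min_ne_b h'⟩)
      have hbb : b = b' := subsingleton_adj h (min_not_mem h) hadjb hadjb'
      -- tails decode to the same graph
      have htails : decode t (V.erase (minF (V \ (b :: t).toFinset))) =
          decode t' (V.erase (minF (V \ (b :: t).toFinset))) := by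
        ext x y
        rw [adj_tail_iff h]
        conv_rhs => rw [hℓeq, adj_tail_iff h', ← heq, ← hℓeq]
      have htt : t = t' := by
        refine ih t' (V.erase (minF (V \ (b :: t).toFinset))) h.tail ?_ htails
        have := h'.tail
        rwa [← hℓeq] at this
      rw [hbb, htt]



/-- Cayley-type lower bound: there are at least `d ^ (d - 2)` labeled forests on `d` nodes. -/
lemma le_card_allForests {d : ℕ} (hd : 2 ≤ d) : d ^ (d - 2) ≤ Fintype.card (AllForests d) := by
  haveI : NeZero d := ⟨by omega⟩
  have hinv : ∀ g : Fin (d - 2) → Fin d, Inv (List.ofFn g) Finset.univ := by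
    intro g
    refine ⟨fun x _ => Finset.mem_univ x, ?_⟩
    rw [Finset.card_univ, Fintype.card_fin, List.length_ofFn]
    omega
  have hinj : Function.Injective (fun g : Fin (d - 2) → Fin d =>
      (⟨decode (List.ofFn g) Finset.univ, isAcyclic_decode (hinv g)⟩ : AllForests d)) := by
    intro g g' hgg
    have := decode_inj (List.ofFn g) (List.ofFn g') Finset.univ (hinv g) (hinv g')
      (congrArg Subtype.val hgg)
    exact List.ofFn_injective this
  have := Fintype.card_le_of_injective _ hinj
  rwa [Fintype.card_fun, Fintype.card_fin, Fintype.card_fin] at this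

end ForestCount

/-- Lower bound on sample complexity, case (b): if the true forest `T` is uniform on the
set `F^d` of all labeled forests on `d` nodes, samples take values in `X^d` with `|X| = r`,
and `n < ρ·log d / log r` with `ρ < 1`, then any estimator `f : (X^d)^n → F^d` has error
probability exceeding `1 - d²·exp((ρ-1)·d·log d)`. -/
theorem sample_complexity_lower_bound_all_forests
    (d n r : ℕ) (hr : 2 ≤ r) (hd : 2 ≤ d)
    (ρ : ℝ) (hρ0 : 0 < ρ) (hρ1 : ρ < 1)
    (hn : (n : ℝ) < ρ * Real.log d / Real.log r)
    (p : AllForests d → (Fin n → Fin d → Fin r) → ℝ)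
    (hp : ∀ t x, 0 ≤ p t x)
    (hmarg : ∀ t, ∑ x : Fin n → Fin d → Fin r, p t x = 1 / Fintype.card (AllForests d))
    (f : (Fin n → Fin d → Fin r) → AllForests d) :
    1 - (d : ℝ) ^ 2 * Real.exp ((ρ - 1) * (d : ℝ) * Real.log d) <
      ∑ t : AllForests d, ∑ x : Fin n → Fin d → Fin r, if f x ≠ t then p t x else 0 := by
  classical
  set N := Fintype.card (AllForests d) with hNdef
  have hNpos : 0 < N := @Fintype.card_pos _ _ ⟨⟨⊥, SimpleGraph.isAcyclic_bot⟩⟩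
  have hNR : (0 : ℝ) < N := by exact_mod_cast hNpos
  set K := Fintype.card (Fin n → Fin d → Fin r) with hKdef
  have hKval : K = r ^ (d * n) := by
    rw [hKdef, Fintype.card_fun, Fintype.card_fun, Fintype.card_fin, Fintype.card_fin,
      Fintype.card_fin, ← pow_mul, mul_comm]
  -- rewrite the error probability
  have hEeq : (∑ t : AllForests d, ∑ x : Fin n → Fin d → Fin r, if f x ≠ t then p t x else 0) =
      1 - ∑ x : Fin n → Fin d → Fin r, p (f x) x := by
    have hsplit : ∀ (t : AllForests d) (x : Fin n → Fin d → Fin r),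
        (if f x ≠ t then p t x else 0) = p t x - (if f x = t then p t x else 0) := by
      intro t x
      by_cases h : f x = t <;> simp [h]
    simp_rw [hsplit, Finset.sum_sub_distrib]
    congr 1
    · rw [Finset.sum_congr rfl (fun t _ => hmarg t), Finset.sum_const, Finset.card_univ,
        nsmul_eq_mul]
      field_simp
      rfl
    · rw [Finset.sum_comm]
      refine Finset.sum_congr rfl (fun x _ => ?_)
      rw [Finset.sum_ite_eq, if_pos (Finset.mem_univ _)]
  rw [hEeq]
  -- bound the probability of correct estimation
  have hub : ∑ x : Fin n → Fin d → Fin r, p (f x) x ≤ (K : ℝ) / N := by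
    calc ∑ x : Fin n → Fin d → Fin r, p (f x) x
        ≤ ∑ _x : Fin n → Fin d → Fin r, 1 / (N : ℝ) := by
          refine Finset.sum_le_sum (fun x _ => ?_)
          rw [← hmarg (f x)]
          exact Finset.single_le_sum (fun y _ => hp (f x) y) (Finset.mem_univ x)
      _ = (K : ℝ) / N := by
          rw [Finset.sum_const, Finset.card_univ, nsmul_eq_mul, ← hKdef, mul_one_div]
  -- numeric bounds
  have hdR : (1 : ℝ) < d := by exact_mod_cast hd
  have hlogd : 0 < Real.log d := Real.log_pos hdR
  have hlogr : 0 < Real.log r := Real.log_pos (by exact_mod_cast hr)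
  have hdpos : (0 : ℝ) < d := by positivity
  have hnlt : (n : ℝ) * Real.log r < ρ * Real.log d := (lt_div_iff₀ hlogr).mp hn
  have hKlt : (K : ℝ) < Real.exp (ρ * d * Real.log d) := by
    have hrpos : 0 < r := by omega
    have hK : (K : ℝ) = Real.exp ((d * n : ℕ) * Real.log r) := by
      rw [hKval, Nat.cast_pow, ← Real.log_pow,
        Real.exp_log (pow_pos (by exact_mod_cast hrpos) _)]
    rw [hK]
    apply Real.exp_lt_exp.mpr
    push_cast
    calc (d : ℝ) * n * Real.log r = (d : ℝ) * ((n : ℝ) * Real.log r) := by ring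
      _ < (d : ℝ) * (ρ * Real.log d) := by
          exact mul_lt_mul_of_pos_left hnlt hdpos
      _ = ρ * d * Real.log d := by ring
  have hdN : ((d : ℝ)) ^ (d - 2) ≤ (N : ℝ) := by
    have := ForestCount.le_card_allForests hd
    exact_mod_cast this
  have hdpowpos : (0 : ℝ) < (d : ℝ) ^ (d - 2) := by positivity
  have hdpow : ((d : ℝ)) ^ (d - 2) = Real.exp (((d : ℝ) - 2) * Real.log d) := by
    rw [← Real.exp_log (show (0 : ℝ) < (d : ℝ) ^ (d - 2) by positivity), Real.log_pow]
    congr 1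
    rw [Nat.cast_sub hd]
    norm_num
  have hfinal : (K : ℝ) / N < (d : ℝ) ^ 2 * Real.exp ((ρ - 1) * d * Real.log d) := by
    have h1 : (K : ℝ) / N ≤ (K : ℝ) / (d : ℝ) ^ (d - 2) := by
      gcongr
    refine lt_of_le_of_lt h1 ?_
    rw [div_lt_iff₀ hdpowpos]
    have hrhs : (d : ℝ) ^ 2 * Real.exp ((ρ - 1) * d * Real.log d) * (d : ℝ) ^ (d - 2) =
        Real.exp (ρ * d * Real.log d) := by
      rw [hdpow]
      have hd2 : ((d : ℝ)) ^ 2 = Real.exp (2 * Real.log d) := by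
        rw [← Real.exp_log (show (0 : ℝ) < (d : ℝ) ^ 2 by positivity), Real.log_pow]
        norm_num
      rw [hd2, ← Real.exp_add, ← Real.exp_add]
      congr 1
      ring
    rw [hrhs]
    exact hKlt
  have := lt_of_le_of_lt hub hfinal
  linarith
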